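/- Let Γ be a profinite group and let L be a discrete Γ-module (i.e. Γ acts on L by group automorphisms and the stabilizer of every element of L is an open subgroup of Γ) whose underlying abelian group is finitely generated and free. Then the first continuous cohomology group H¹(Γ, L), computed with continuous cochains (equivalently, continuous crossed homomorphisms Γ → L modulo principal ones, L carrying the discrete topology), is finite. -/

import Mathlib

/-!
STATEMENT 18: Let `Γ` be a profinite group and `L` a discrete `Γ`-module (the action
is by group automorphisms of `L`, and every stabilizer is open) whose underlying
abelian group is finitely generated and free.  Then the first continuous cohomology
group `H¹(Γ, L)` (continuous = locally constant crossed homomorphisms `Γ → L`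
modulo principal ones) is finite.
-/

noncomputable section

namespace Stmt18

variable (Γ : Type*) [Group Γ] [TopologicalSpace Γ] [IsTopologicalGroup Γ]
variable (L : Type*) [AddCommGroup L] [DistribMulAction Γ L]

/-- Continuous (i.e. locally constant, for the discrete topology on `L`)
1-cocycles: crossed homomorphisms `Γ → L`. -/
def cocycles : AddSubgroup (Γ → L) where
  carrier := {c | IsLocallyConstant c ∧ ∀ g h : Γ, c (g * h) = c g + g • c h}
  add_mem' := by
    rintro a b ⟨ha, ha'⟩ ⟨hb, hb'⟩
    refine ⟨ha.add hb, fun g h => ?_⟩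
    simp only [Pi.add_apply, ha' g h, hb' g h, smul_add]
    abel
  zero_mem' := by
    refine ⟨IsLocallyConstant.const 0, fun g h => ?_⟩
    simp
  neg_mem' := by
    rintro a ⟨ha, ha'⟩
    refine ⟨ha.neg, fun g h => ?_⟩
    simp only [Pi.neg_apply, ha' g h, smul_neg]
    abel

/-- 1-coboundaries: principal crossed homomorphisms. -/
def coboundaries : AddSubgroup (Γ → L) where
  carrier := {c | ∃ x : L, ∀ g : Γ, c g = g • x - x}
  add_mem' := by
    rintro a b ⟨x, hx⟩ ⟨y, hy⟩
    refine ⟨x + y, fun g => ?_⟩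
    simp only [Pi.add_apply, hx g, hy g, smul_add]
    abel
  zero_mem' := ⟨0, fun g => by simp⟩
  neg_mem' := by
    rintro a ⟨x, hx⟩
    refine ⟨-x, fun g => ?_⟩
    simp only [Pi.neg_apply, hx g, smul_neg]
    abel

/-- Continuous group cohomology `H¹(Γ, L)` in degree `1`, defined via continuous
(locally constant) crossed homomorphisms modulo principal ones. -/
def H1 : Type _ :=
  cocycles Γ L ⧸ ((coboundaries Γ L).addSubgroupOf (cocycles Γ L))

theorem H1_finite_of_profinite_of_fg_free
    [CompactSpace Γ] [T2Space Γ] [TotallyDisconnectedSpace Γ]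
    (hopen : ∀ x : L, IsOpen {g : Γ | g • x = x})
    (hfree : ∃ n : ℕ, Nonempty (L ≃+ (Fin n → ℤ))) :
    Finite (H1 Γ L) := by
  obtain ⟨n, ⟨e⟩⟩ := hfree
  -- L is torsion-free
  have htf : ∀ (m : ℤ), m ≠ 0 → ∀ x : L, m • x = 0 → x = 0 := by
    intro m hm x hx
    have h1 : m • e x = 0 := by rw [← map_zsmul, hx, map_zero]
    have h2 : e x = 0 := by
      funext i
      have := congrFun h1 i
      simp only [Pi.smul_apply, smul_eq_mul, Pi.zero_apply] at this ⊢
      exact (mul_eq_zero.mp this).resolve_left hm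
    have := congrArg e.symm h2
    simpa using this
  -- the kernel of the action
  set K : Subgroup Γ :=
    { carrier := {g | ∀ x : L, g • x = x}
      one_mem' := fun x => one_smul Γ x
      mul_mem' := fun {a b} ha hb x => by rw [mul_smul, hb x, ha x]
      inv_mem' := fun {a} ha x => by
        conv_lhs => rw [← ha x, inv_smul_smul] } with hK
  have hKmem : ∀ g : Γ, g ∈ K ↔ ∀ x : L, g • x = x := fun g => Iff.rfl
  -- K is open
  have hKopen : IsOpen (K : Set Γ) := by
    have hEq : (K : Set Γ) = ⋂ i : Fin n, {g : Γ | g • e.symm (Pi.single i 1) = e.symm (Pi.single i 1)} := by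
      ext g
      simp only [Set.mem_iInter, Set.mem_setOf_eq]
      constructor
      · intro hg i; exact hg _
      · intro hg x
        set S : AddSubgroup L :=
          { carrier := {y | g • y = y}
            zero_mem' := smul_zero g
            add_mem' := fun {a b} ha hb => by
              simp only [Set.mem_setOf_eq] at *
              rw [smul_add, ha, hb]
            neg_mem' := fun {a} ha => by
              simp only [Set.mem_setOf_eq] at *
              rw [smul_neg, ha] } with hS
        have hx : x = e.symm (e x) := (e.symm_apply_apply x).symm
        rw [hx]
        have hrep : e x = ∑ i : Fin n, (e x i) • Pi.single i (1 : ℤ) := by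
          conv_lhs => rw [← Finset.univ_sum_single (e x)]
          refine Finset.sum_congr rfl fun i _ => ?_
          funext j
          simp [Pi.single_apply, smul_eq_mul, mul_ite]
        have : e.symm (e x) ∈ S := by
          rw [hrep, map_sum]
          refine AddSubgroup.sum_mem S fun i _ => ?_
          rw [map_zsmul]
          exact AddSubgroup.zsmul_mem S (hg i) _
        exact this
    rw [hEq]
    exact isOpen_iInter_of_finite fun i => hopen _
  -- the quotient is finite
  have hQfin : Finite (Γ ⧸ K) := K.quotient_finite_of_isOpen hKopen
  haveI := Fintype.ofFinite (Γ ⧸ K)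
  set m : ℕ := Nat.card (Γ ⧸ K) with hm
  have hmpos : 0 < m := Nat.card_pos
  -- cocycles vanish on K
  have hvanish : ∀ c : cocycles Γ L, ∀ k ∈ K, (c : Γ → L) k = 0 := by
    rintro ⟨c, hlc, hcoc⟩ k hk
    show c k = 0
    have hpow : ∀ j : ℕ, c (k ^ j) = j • c k := by
      intro j
      induction j with
      | zero => simpa using hcoc 1 1
      | succ j ih =>
        rw [pow_succ', hcoc k (k ^ j), ih, hKmem k |>.mp hk, succ_nsmul']
    have hfin : (Set.range c).Finite := hlc.range_finite
    haveI := hfin.to_subtype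
    obtain ⟨j₁, j₂, hne, heq⟩ := Finite.exists_ne_map_eq_of_infinite
      (fun j : ℕ => (⟨c (k ^ j), Set.mem_range_self _⟩ : Set.range c))
    have heq' : (j₁ : ℤ) • c k = (j₂ : ℤ) • c k := by
      have := congrArg Subtype.val heq
      simp only at this
      rw [hpow j₁, hpow j₂] at this
      simpa [natCast_zsmul] using this
    have : ((j₁ : ℤ) - j₂) • c k = 0 := by rw [sub_smul, heq', sub_self]
    have hj : ((j₁ : ℤ) - j₂) ≠ 0 := sub_ne_zero.mpr (by exact_mod_cast hne)
    have hck0 : c k = 0 := htf _ hj _ this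
    have := hcoc k 1
    rw [mul_one] at this
    have hk1 : k • c 1 = c 1 := hKmem k |>.mp hk _
    exact hck0
  -- cocycles are constant on left cosets of K
  have hconst : ∀ c : cocycles Γ L, ∀ g : Γ, ∀ k ∈ K, (c : Γ → L) (g * k) = (c : Γ → L) g := by
    rintro ⟨c, hlc, hcoc⟩ g k hk
    show c (g * k) = c g
    have h0 : c k = 0 := hvanish ⟨c, hlc, hcoc⟩ k hk
    rw [hcoc g k, h0, smul_zero, add_zero]
  -- the lift of a cocycle to the quotient
  let lift : cocycles Γ L → (Γ ⧸ K → L) := fun c q =>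
    Quotient.liftOn' q (c : Γ → L) (fun a b hab => by
      rw [QuotientGroup.leftRel_apply] at hab
      have : b = a * (a⁻¹ * b) := by group
      rw [this, hconst c a _ hab])
  have hlift_mk : ∀ (c : cocycles Γ L) (g : Γ), lift c (g : Γ ⧸ K) = (c : Γ → L) g :=
    fun c g => rfl
  -- Φ as an additive hom
  let Φ : cocycles Γ L →+ (Γ ⧸ K → L) :=
    { toFun := lift
      map_zero' := by
        funext q
        refine Quotient.inductionOn' q fun g => ?_
        rfl
      map_add' := fun a b => by
        funext q
        refine Quotient.inductionOn' q fun g => ?_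
        rfl }
  have hΦinj : Function.Injective Φ := by
    intro a b hab
    ext g
    have := congrFun hab (g : Γ ⧸ K)
    simpa [Φ, hlift_mk] using this
  -- finiteness structure
  haveI : Module.Finite ℤ (Fin n → ℤ) := inferInstance
  haveI : IsNoetherian ℤ L := isNoetherian_of_linearEquiv e.toIntLinearEquiv.symm
  haveI : IsNoetherian ℤ (Γ ⧸ K → L) := isNoetherian_pi'
  haveI : Module.Finite ℤ (cocycles Γ L) :=
    Module.Finite.of_injective Φ.toIntLinearMap hΦinj
  haveI hFG : AddGroup.FG (cocycles Γ L) := Module.Finite.iff_addGroup_fg.mp inferInstance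
  show Finite (cocycles Γ L ⧸ ((coboundaries Γ L).addSubgroupOf (cocycles Γ L)))
  haveI : AddGroup.FG (cocycles Γ L ⧸ ((coboundaries Γ L).addSubgroupOf (cocycles Γ L))) :=
    AddGroup.fg_of_surjective (QuotientAddGroup.mk'_surjective _)
  apply AddCommGroup.finite_of_fg_torsion
  -- torsion: every class is killed by m
  intro x
  obtain ⟨c, rfl⟩ := QuotientAddGroup.mk'_surjective _ x
  refine isOfFinAddOrder_iff_nsmul_eq_zero.mpr ⟨m, hmpos, ?_⟩
  rw [← map_nsmul]
  rw [QuotientAddGroup.mk'_apply, QuotientAddGroup.eq_zero_iff]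
  rw [AddSubgroup.mem_addSubgroupOf]
  -- show m • c is a coboundary
  set σ : L := ∑ q : Γ ⧸ K, lift c q with hσ
  refine ⟨-σ, fun g => ?_⟩
  have hcoe : ((m • c : cocycles Γ L) : Γ → L) g = m • (c : Γ → L) g := rfl
  rw [hcoe]
  have key : ∀ q : Γ ⧸ K, lift c (g • q) = (c : Γ → L) g + g • lift c q := by
    intro q
    refine Quotient.inductionOn' q fun r => ?_
    have hsm : g • (QuotientGroup.mk r : Γ ⧸ K) = (QuotientGroup.mk (g * r) : Γ ⧸ K) := rfl
    have : lift c (g • (QuotientGroup.mk r : Γ ⧸ K)) = (c : Γ → L) (g * r) := by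
      rw [hsm]; rfl
    rw [this]
    have := c.2.2 g r
    rw [this]
    rfl
  have hsum : ∑ q : Γ ⧸ K, lift c (g • q) = σ := by
    rw [hσ]
    exact Equiv.sum_comp (MulAction.toPerm g) (lift c)
  have hsum2 : ∑ q : Γ ⧸ K, lift c (g • q) = m • (c : Γ → L) g + g • σ := by
    simp only [key]
    rw [Finset.sum_add_distrib, Finset.sum_const, Finset.card_univ, hσ, Finset.smul_sum]
    congr 1
    rw [hm, Nat.card_eq_fintype_card]
  have h1 : σ = m • (c : Γ → L) g + g • σ := hsum.symm.trans hsum2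
  have h2 : m • (c : Γ → L) g = σ - g • σ := by
    rw [eq_sub_iff_add_eq]
    exact h1.symm
  rw [h2, smul_neg]
  abel

end Stmt18
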